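/- Let δ(w,z) = |g₀(w,z)|^{1/2} where, for w, z ∈ bD, |g₀(w,z)| ≈ |Im⟨∂ρ(w), w−z⟩| + |w−z|². Then δ satisfies the quasi-triangle inequality: δ(w,z) ≲ δ(w,ζ) + δ(ζ,z) for all w, ζ, z ∈ bD. -/

import Mathlib

open scoped BigOperators

set_option maxHeartbeats 1000000

lemma sum_mul_abs_le (n : ℕ) (a b : EuclideanSpace ℂ (Fin n)) :
    ‖∑ j, a j * b j‖ ≤ ‖a‖ * ‖b‖ := by
  set a' : EuclideanSpace ℂ (Fin n) := WithLp.toLp 2 (fun j => starRingEnd ℂ (a j)) with ha'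
  have h1 : (inner ℂ a' b : ℂ) = ∑ j, a j * b j := by
    rw [PiLp.inner_apply]
    refine Finset.sum_congr rfl fun j _ => ?_
    simp [ha', RCLike.inner_apply, mul_comm]
  have h2 : ‖a'‖ = ‖a‖ := by
    rw [EuclideanSpace.norm_eq, EuclideanSpace.norm_eq]
    simp [ha']
  calc ‖∑ j, a j * b j‖ = ‖(inner ℂ a' b : ℂ)‖ := by rw [h1]
    _ ≤ ‖a'‖ * ‖b‖ := norm_inner_le_norm a' b
    _ = ‖a‖ * ‖b‖ := by rw [h2]

/-- Quasi-triangle inequality for `δ(w,z) = |g₀(w,z)|^{1/2}` where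
`δ(w,z)² ≈ |Im⟨∂ρ(w), w−z⟩| + |w−z|²` on `bD`, with `∂ρ` Lipschitz on `bD`. -/
theorem stmt6 (n : ℕ) (bD : Set (EuclideanSpace ℂ (Fin n)))
    (dρ : EuclideanSpace ℂ (Fin n) → EuclideanSpace ℂ (Fin n))
    (L : ℝ) (hL : ∀ w ∈ bD, ∀ ζ ∈ bD, ‖dρ w - dρ ζ‖ ≤ L * ‖w - ζ‖)
    (δ : EuclideanSpace ℂ (Fin n) → EuclideanSpace ℂ (Fin n) → ℝ)
    (hδ0 : ∀ w z, 0 ≤ δ w z)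
    (c₁ c₂ : ℝ) (hc₁ : 0 < c₁) (hc₂ : 0 < c₂)
    (hcomp : ∀ w ∈ bD, ∀ z ∈ bD,
      c₁ * (|(∑ j, dρ w j * (w j - z j)).im| + ‖w - z‖ ^ 2) ≤ δ w z ^ 2 ∧
        δ w z ^ 2 ≤ c₂ * (|(∑ j, dρ w j * (w j - z j)).im| + ‖w - z‖ ^ 2)) :
    ∃ C : ℝ, 0 < C ∧ ∀ w ∈ bD, ∀ ζ ∈ bD, ∀ z ∈ bD,
      δ w z ≤ C * (δ w ζ + δ ζ z) := by
  set M : ℝ := max L 0 with hM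
  have hM0 : 0 ≤ M := le_max_right _ _
  set K : ℝ := M / 2 + 2 with hK
  have hK1 : (1:ℝ) ≤ K := by simp [hK]; linarith
  have hKpos : (0:ℝ) < K := by linarith
  refine ⟨Real.sqrt (c₂ * K / c₁), Real.sqrt_pos.mpr (by positivity), ?_⟩
  intro w hw ζ hζ z hz
  -- abbreviations
  set A : ℝ := |(∑ j, dρ w j * (w j - z j)).im| + ‖w - z‖ ^ 2 with hA
  set B : ℝ := |(∑ j, dρ w j * (w j - ζ j)).im| + ‖w - ζ‖ ^ 2 with hB
  set D : ℝ := |(∑ j, dρ ζ j * (ζ j - z j)).im| + ‖ζ - z‖ ^ 2 with hD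
  -- split the sum
  have hsplit : (∑ j, dρ w j * (w j - z j)) =
      (∑ j, dρ w j * (w j - ζ j)) + (∑ j, dρ ζ j * (ζ j - z j)) +
      (∑ j, (dρ w - dρ ζ) j * (ζ j - z j)) := by
    rw [← Finset.sum_add_distrib, ← Finset.sum_add_distrib]
    refine Finset.sum_congr rfl fun j _ => ?_
    have : (dρ w - dρ ζ) j = dρ w j - dρ ζ j := rfl
    rw [this]; ring
  -- bound the error term
  have herr : ‖∑ j, (dρ w - dρ ζ) j * (ζ j - z j)‖ ≤
      (M / 2) * (‖w - ζ‖ ^ 2 + ‖ζ - z‖ ^ 2) := by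
    have h1 := sum_mul_abs_le n (dρ w - dρ ζ) (ζ - z)
    have heqs : ∑ j, (dρ w - dρ ζ) j * ((ζ - z) j) = ∑ j, (dρ w - dρ ζ) j * (ζ j - z j) :=
      Finset.sum_congr rfl fun j _ => rfl
    rw [heqs] at h1
    have h2 : ‖dρ w - dρ ζ‖ ≤ M * ‖w - ζ‖ :=
      le_trans (hL w hw ζ hζ) (mul_le_mul_of_nonneg_right (le_max_left _ _) (norm_nonneg _))
    have h3 : ‖dρ w - dρ ζ‖ * ‖ζ - z‖ ≤ M * ‖w - ζ‖ * ‖ζ - z‖ :=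
      mul_le_mul_of_nonneg_right h2 (norm_nonneg _)
    have h4 : M * ‖w - ζ‖ * ‖ζ - z‖ ≤ (M / 2) * (‖w - ζ‖ ^ 2 + ‖ζ - z‖ ^ 2) := by
      nlinarith [sq_nonneg (‖w - ζ‖ - ‖ζ - z‖), hM0]
    exact le_trans h1 (le_trans h3 h4)
  -- imaginary part bound
  have him : |(∑ j, dρ w j * (w j - z j)).im| ≤
      |(∑ j, dρ w j * (w j - ζ j)).im| + |(∑ j, dρ ζ j * (ζ j - z j)).im| +
      (M / 2) * (‖w - ζ‖ ^ 2 + ‖ζ - z‖ ^ 2) := by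
    rw [hsplit]
    have habs : |(∑ j, (dρ w - dρ ζ) j * (ζ j - z j)).im| ≤
        ‖∑ j, (dρ w - dρ ζ) j * (ζ j - z j)‖ := Complex.abs_im_le_norm _
    calc |((∑ j, dρ w j * (w j - ζ j)) + (∑ j, dρ ζ j * (ζ j - z j)) +
          (∑ j, (dρ w - dρ ζ) j * (ζ j - z j))).im|
        = |(∑ j, dρ w j * (w j - ζ j)).im + (∑ j, dρ ζ j * (ζ j - z j)).im +
          (∑ j, (dρ w - dρ ζ) j * (ζ j - z j)).im| := by simp [Complex.add_im]
      _ ≤ |(∑ j, dρ w j * (w j - ζ j)).im| + |(∑ j, dρ ζ j * (ζ j - z j)).im| +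
          |(∑ j, (dρ w - dρ ζ) j * (ζ j - z j)).im| := by
            exact le_trans (abs_add_le _ _) (by gcongr; exact abs_add_le _ _)
      _ ≤ _ := by linarith [le_trans habs herr]
  -- norm bound
  have hnorm : ‖w - z‖ ^ 2 ≤ 2 * (‖w - ζ‖ ^ 2 + ‖ζ - z‖ ^ 2) := by
    have h : ‖w - z‖ ≤ ‖w - ζ‖ + ‖ζ - z‖ := by
      have := norm_add_le (w - ζ) (ζ - z)
      simpa [sub_add_sub_cancel] using this
    nlinarith [norm_nonneg (w - ζ), norm_nonneg (ζ - z), norm_nonneg (w - z),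
      sq_nonneg (‖w - ζ‖ - ‖ζ - z‖)]
  have hAle : A ≤ K * (B + D) := by
    have hB0 : 0 ≤ B := by positivity
    have hD0 : 0 ≤ D := by positivity
    have : A ≤ B + D + (M / 2 + 1) * (‖w - ζ‖ ^ 2 + ‖ζ - z‖ ^ 2) := by
      rw [hA, hB, hD]; nlinarith [abs_nonneg (∑ j, dρ w j * (w j - ζ j)).im]
    have hle : (M / 2 + 1) * (‖w - ζ‖ ^ 2 + ‖ζ - z‖ ^ 2) ≤ (M / 2 + 1) * (B + D) := by
      apply mul_le_mul_of_nonneg_left _ (by linarith)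
      rw [hB, hD]
      have := abs_nonneg (∑ j, dρ w j * (w j - ζ j)).im
      have := abs_nonneg (∑ j, dρ ζ j * (ζ j - z j)).im
      linarith
    rw [hK]; nlinarith
  -- put everything together
  obtain ⟨h1wz, h2wz⟩ := hcomp w hw z hz
  obtain ⟨h1wζ, h2wζ⟩ := hcomp w hw ζ hζ
  obtain ⟨h1ζz, h2ζz⟩ := hcomp ζ hζ z hz
  have hB' : c₁ * B ≤ δ w ζ ^ 2 := by rw [hB]; exact h1wζ
  have hD' : c₁ * D ≤ δ ζ z ^ 2 := by rw [hD]; exact h1ζz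
  have hA' : δ w z ^ 2 ≤ c₂ * A := by rw [hA]; exact h2wz
  have hs0 : 0 ≤ δ w ζ + δ ζ z := by linarith [hδ0 w ζ, hδ0 ζ z]
  clear_value A B D
  clear hA hB hD hsplit herr him hnorm h1wz h2wz h1wζ h2wζ h1ζz h2ζz hcomp hL
  have h₁ : δ w z ^ 2 ≤ c₂ * (K * (B + D)) :=
    hA'.trans (mul_le_mul_of_nonneg_left hAle hc₂.le)
  have h₂ : c₁ * (B + D) ≤ (δ w ζ + δ ζ z) ^ 2 := by
    nlinarith [hB', hD', hδ0 w ζ, hδ0 ζ z]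
  have hfin : c₁ * δ w z ^ 2 ≤ c₂ * K * (δ w ζ + δ ζ z) ^ 2 := by
    have t1 := mul_le_mul_of_nonneg_left h₁ hc₁.le
    have t2 := mul_le_mul_of_nonneg_left h₂ (show (0:ℝ) ≤ c₂ * K by positivity)
    nlinarith [t1, t2]
  have hsq : δ w z ^ 2 ≤ (c₂ * K / c₁) * (δ w ζ + δ ζ z) ^ 2 := by
    rw [div_mul_eq_mul_div, le_div_iff₀ hc₁]
    nlinarith [hfin]
  have h := Real.sqrt_le_sqrt hsq
  rw [Real.sqrt_sq (hδ0 w z)] at h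
  have heq : Real.sqrt ((c₂ * K / c₁) * (δ w ζ + δ ζ z) ^ 2) =
      Real.sqrt (c₂ * K / c₁) * (δ w ζ + δ ζ z) := by
    rw [Real.sqrt_mul (by positivity), Real.sqrt_sq hs0]
  rw [heq] at h
  exact h
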